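/- arXiv:hep-th/9502041 — 2 statements merged into one kernel-verified Lean document; each statement's English description precedes it below -/
import Mathlib

section
/- With notation as in the context, the identity a_{p+1}(u) f^{(p)}(σ;u) + e^{2λσ} b_p(λ)^2 f^{(p-1)}(σ;u) = f^{(p)}(σ;u-λ) a_1(u) holds for all σ, u ∈ ℂ and integers 1 ≤ p ≤ 2s, where b_p(λ)^2 = sinh(pλ) sinh((2s+1-p)λ). -/
open Finset Complex

/-- q-integer `[n] = sinh(nλ)/sinh(λ)` with `q = e^λ`. -/
noncomputable def sqint (lam : ℂ) (n : ℕ) : ℂ := Complex.sinh (n * lam) / Complex.sinh lam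

/-- q-factorial. -/
noncomputable def sqfact (lam : ℂ) : ℕ → ℂ
  | 0 => 1
  | n + 1 => sqint lam (n + 1) * sqfact lam n

/-- q-binomial coefficient `[m choose n]`, zero when `n > m`. -/
noncomputable def sqbinom (lam : ℂ) (m n : ℕ) : ℂ :=
  if n ≤ m then sqfact lam m / (sqfact lam (m - n) * sqfact lam n) else 0

/-- The function
`f^{(p)}(σ;u) = ∑_{k=0}^{p} (-e^{2λσ})^k [p choose k]_q
  ∏_{j=1}^{k} sinh(u+(j-1)λ) ∏_{j=k+1}^{p} sinh(u+(2s+j-p)λ)`,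
where `s2 = 2s`. -/
noncomputable def ff (s2 : ℕ) (lam σ u : ℂ) (p : ℕ) : ℂ :=
  ∑ k ∈ range (p + 1),
    (-Complex.exp (2 * lam * σ)) ^ k * sqbinom lam p k
      * (∏ j ∈ range k, Complex.sinh (u + (j : ℂ) * lam))
      * (∏ j ∈ Finset.Ico k p, Complex.sinh (u + ((s2 : ℂ) + (j : ℂ) + 1 - (p : ℂ)) * lam))

lemma sqfact_zero_mono (lam : ℂ) {m n : ℕ} (h : sqfact lam m = 0) (hmn : m ≤ n) :
    sqfact lam n = 0 := by
  induction n with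
  | zero => simpa [Nat.le_zero.mp hmn] using h
  | succ n ih =>
    rcases Nat.lt_or_ge m (n+1) with h1 | h1
    · have := ih (Nat.lt_succ_iff.mp h1)
      simp [sqfact, this]
    · have : m = n+1 := le_antisymm hmn h1
      simpa [this] using h

lemma sqint_zero_fact (lam : ℂ) {k n : ℕ} (hk : 1 ≤ k) (hkn : k ≤ n)
    (h : sqint lam k = 0) : sqfact lam n = 0 := by
  obtain ⟨k', rfl⟩ : ∃ k', k = k' + 1 := ⟨k - 1, by omega⟩
  have : sqfact lam (k'+1) = 0 := by simp [sqfact, h]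
  exact sqfact_zero_mono lam this hkn

lemma sq_key (lam : ℂ) {p k : ℕ} (hk : 1 ≤ k) (hkp : k ≤ p) :
    sqbinom lam p k * sqint lam k = sqint lam p * sqbinom lam (p-1) (k-1) := by
  obtain ⟨k', rfl⟩ : ∃ k', k = k' + 1 := ⟨k - 1, by omega⟩
  obtain ⟨p', rfl⟩ : ∃ p', p = p' + 1 := ⟨p - 1, by omega⟩
  have hkp' : k' ≤ p' := by omega
  simp only [sqbinom, if_pos (by omega : k' + 1 ≤ p' + 1), if_pos hkp',
    Nat.succ_sub_one, Nat.succ_sub_succ]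
  by_cases h1 : sqfact lam (p' - k') = 0
  · have hp' : sqfact lam p' = 0 := sqfact_zero_mono lam h1 (by omega)
    have hp1 : sqfact lam (p'+1) = 0 := sqfact_zero_mono lam h1 (by omega)
    simp [hp', hp1]
  by_cases h2 : sqfact lam k' = 0
  · have hp' : sqfact lam p' = 0 := sqfact_zero_mono lam h2 hkp'
    have hp1 : sqfact lam (p'+1) = 0 := sqfact_zero_mono lam h2 (by omega)
    simp [hp', hp1]
  by_cases h3 : sqint lam (k'+1) = 0
  · have hfk : sqfact lam (k'+1) = 0 := by simp [sqfact, h3]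
    rcases Nat.lt_or_ge k' p' with h4 | h4
    · have hp' : sqfact lam p' = 0 := sqint_zero_fact lam (by omega) (by omega) h3
      simp [hfk, hp', h3]
    · have : k' = p' := le_antisymm hkp' h4
      subst this
      simp [hfk, h3]
  by_cases h4 : sqfact lam p' = 0
  · have hp1 : sqfact lam (p'+1) = 0 := sqfact_zero_mono lam h4 (by omega)
    simp [h4, hp1]
  · have e1 : sqfact lam (p'+1) = sqint lam (p'+1) * sqfact lam p' := rfl
    have e2 : sqfact lam (k'+1) = sqint lam (k'+1) * sqfact lam k' := rfl
    simp only [Nat.sub_zero]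
    rw [e1, e2, if_pos hkp']
    field_simp

lemma sinh_diff (x y z : ℂ) :
    Complex.sinh (x+y) * Complex.sinh (x-y) - Complex.sinh (x+z) * Complex.sinh (x-z)
      = Complex.sinh (y+z) * Complex.sinh (z-y) := by
  rw [Complex.sinh_add, Complex.sinh_sub, Complex.sinh_add, Complex.sinh_sub,
    Complex.sinh_add, Complex.sinh_sub]
  linear_combination (Complex.sinh x^2 - Complex.sinh z^2) * Complex.cosh_sq y
    + (Complex.sinh y^2 - Complex.sinh x^2) * Complex.cosh_sq z
    + (Complex.sinh z^2 - Complex.sinh y^2) * Complex.cosh_sq x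

lemma sum_shift_eq (n : ℕ) (f g h : ℕ → ℂ) (h0 : f 0 = h 0)
    (hstep : ∀ k, k < n → f (k+1) + g k = h (k+1)) :
    ((∑ k ∈ range (n+1), f k) + ∑ k ∈ range n, g k) = ∑ k ∈ range (n+1), h k := by
  rw [Finset.sum_range_succ', Finset.sum_range_succ' h n]
  have hs : ∑ k ∈ range n, (f (k+1) + g k) = ∑ k ∈ range n, h (k+1) :=
    Finset.sum_congr rfl fun k hk => hstep k (Finset.mem_range.mp hk)
  rw [Finset.sum_add_distrib] at hs
  linear_combination hs + h0

lemma prod_tele (s2 p' : ℕ) (lam u : ℂ) (a : ℕ) : ∀ m : ℕ, a ≤ m →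
    Complex.sinh (u + ((s2:ℂ)+(a:ℂ)-((p':ℂ)+1)) * lam)
        * ∏ j ∈ Finset.Ico a m, Complex.sinh (u + ((s2:ℂ)+(j:ℂ)+1-((p':ℂ)+1))*lam)
      = (∏ j ∈ Finset.Ico a m,
            Complex.sinh (u - lam + ((s2:ℂ)+(j:ℂ)+1-((p':ℂ)+1))*lam))
          * Complex.sinh (u + ((s2:ℂ)+(m:ℂ)-((p':ℂ)+1))*lam) := by
  refine Nat.le_induction ?_ ?_
  · simp [mul_comm]
  · intro m ham ih
    rw [Finset.prod_Ico_succ_top ham, Finset.prod_Ico_succ_top ham]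
    have e1 : Complex.sinh (u - lam + ((s2:ℂ)+((m:ℕ):ℂ)+1-((p':ℂ)+1))*lam)
        = Complex.sinh (u + ((s2:ℂ)+(m:ℂ)-((p':ℂ)+1))*lam) := by
      congr 1; push_cast; ring
    have e2 : Complex.sinh (u + ((s2:ℂ)+(((m+1:ℕ)):ℂ)-((p':ℂ)+1))*lam)
        = Complex.sinh (u + ((s2:ℂ)+((m:ℕ):ℂ)+1-((p':ℂ)+1))*lam) := by
      congr 1; push_cast; ring
    rw [e1, e2]
    linear_combination Complex.sinh (u + ((s2:ℂ)+(m:ℂ)+1-((p':ℂ)+1))*lam) * ih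

lemma prod_shift (s2 p' : ℕ) (lam u : ℂ) :
    Complex.sinh (u + ((s2:ℂ) - ((p':ℂ)+1)) * lam)
        * ∏ j ∈ Finset.Ico 0 (p'+1), Complex.sinh (u + ((s2:ℂ)+(j:ℂ)+1-((p':ℂ)+1))*lam)
      = (∏ j ∈ Finset.Ico 0 (p'+1),
            Complex.sinh (u - lam + ((s2:ℂ)+(j:ℂ)+1-((p':ℂ)+1))*lam))
          * Complex.sinh (u + (s2:ℂ)*lam) := by
  have key : ∀ m : ℕ, Complex.sinh (u + ((s2:ℂ) - ((p':ℂ)+1)) * lam)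
        * ∏ j ∈ Finset.range m, Complex.sinh (u + ((s2:ℂ)+(j:ℂ)+1-((p':ℂ)+1))*lam)
      = (∏ j ∈ Finset.range m,
            Complex.sinh (u - lam + ((s2:ℂ)+(j:ℂ)+1-((p':ℂ)+1))*lam))
          * Complex.sinh (u + ((s2:ℂ)+(m:ℂ)-((p':ℂ)+1))*lam) := by
    intro m
    induction m with
    | zero =>
      simp only [Finset.range_zero, Finset.prod_empty, mul_one, one_mul, Nat.cast_zero]
      congr 1; ring
    | succ m ih =>
      rw [Finset.prod_range_succ, Finset.prod_range_succ]
      have e1 : Complex.sinh (u - lam + ((s2:ℂ)+((m:ℕ):ℂ)+1-((p':ℂ)+1))*lam)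
          = Complex.sinh (u + ((s2:ℂ)+(m:ℂ)-((p':ℂ)+1))*lam) := by
        congr 1; push_cast; ring
      have e2 : (u + ((s2:ℂ)+(((m+1:ℕ)):ℂ)-((p':ℂ)+1))*lam)
          = (u + ((s2:ℂ)+((m:ℕ):ℂ)+1-((p':ℂ)+1))*lam) := by push_cast; ring
      rw [e1, e2]
      linear_combination Complex.sinh (u + ((s2:ℂ)+(m:ℂ)+1-((p':ℂ)+1))*lam) * ih
  have h := key (p'+1)
  rw [← Finset.range_eq_Ico]
  have e3 : Complex.sinh (u + ((s2:ℂ)+(((p'+1:ℕ)):ℂ)-((p':ℂ)+1))*lam)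
      = Complex.sinh (u + (s2:ℂ)*lam) := by congr 1; push_cast; ring
  rw [e3] at h
  exact h

lemma per_k (lam u : ℂ) (hlam : Complex.sinh lam ≠ 0) (s2 p' k : ℕ) (hk : k ≤ p') :
    Complex.sinh (u + ((s2:ℂ) - ((p':ℂ)+1)) * lam)
        * (sqbinom lam (p'+1) (k+1)
          * (∏ j ∈ range (k+1), Complex.sinh (u + (j:ℂ) * lam))
          * (∏ j ∈ Finset.Ico (k+1) (p'+1),
              Complex.sinh (u + ((s2:ℂ) + (j:ℂ) + 1 - ((p':ℂ)+1)) * lam)))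
      - Complex.sinh (((p':ℂ)+1) * lam) * Complex.sinh (((s2:ℂ) + 1 - ((p':ℂ)+1)) * lam)
        * (sqbinom lam p' k
          * (∏ j ∈ range k, Complex.sinh (u + (j:ℂ) * lam))
          * (∏ j ∈ Finset.Ico k p',
              Complex.sinh (u + ((s2:ℂ) + (j:ℂ) + 1 - (p':ℂ)) * lam)))
      = (sqbinom lam (p'+1) (k+1)
          * (∏ j ∈ range (k+1), Complex.sinh (u - lam + (j:ℂ) * lam))
          * (∏ j ∈ Finset.Ico (k+1) (p'+1),
              Complex.sinh (u - lam + ((s2:ℂ) + (j:ℂ) + 1 - ((p':ℂ)+1)) * lam)))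
        * Complex.sinh (u + (s2:ℂ) * lam) := by
  set P : ℂ := ∏ j ∈ range k, Complex.sinh (u + (j:ℂ) * lam) with hPdef
  set Qk : ℂ := ∏ j ∈ Finset.Ico (k+1) (p'+1),
      Complex.sinh (u + ((s2:ℂ) + (j:ℂ) + 1 - ((p':ℂ)+1)) * lam) with hQdef
  set Q1 : ℂ := ∏ j ∈ Finset.Ico (k+1) (p'+1),
      Complex.sinh (u - lam + ((s2:ℂ) + (j:ℂ) + 1 - ((p':ℂ)+1)) * lam) with hQ1def
  -- products over range (k+1)
  have hP : ∏ j ∈ range (k+1), Complex.sinh (u + (j:ℂ) * lam)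
      = P * Complex.sinh (u + (k:ℂ) * lam) := Finset.prod_range_succ _ _
  have hP' : ∏ j ∈ range (k+1), Complex.sinh (u - lam + (j:ℂ) * lam)
      = P * Complex.sinh (u - lam) := by
    rw [Finset.prod_range_succ']
    congr 1
    · refine Finset.prod_congr rfl fun j _ => ?_
      congr 1; push_cast; ring
    · norm_num
  -- reindexing of the middle Ico product
  have hQ : ∏ j ∈ Finset.Ico k p',
        Complex.sinh (u + ((s2:ℂ) + (j:ℂ) + 1 - (p':ℂ)) * lam) = Qk := by
    rw [hQdef, Finset.prod_Ico_eq_prod_range, Finset.prod_Ico_eq_prod_range]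
    have e : p' + 1 - (k+1) = p' - k := by omega
    rw [e]
    refine Finset.prod_congr rfl fun i _ => ?_
    congr 1; push_cast; ring
  -- telescoping
  have hQ' : Complex.sinh (u + ((s2:ℂ) + (k:ℂ) - (p':ℂ)) * lam) * Qk
      = Q1 * Complex.sinh (u + (s2:ℂ) * lam) := by
    have h := prod_tele s2 p' lam u (k+1) (p'+1) (by omega)
    have e1 : Complex.sinh (u + ((s2:ℂ)+(((k+1:ℕ)):ℂ)-((p':ℂ)+1)) * lam)
        = Complex.sinh (u + ((s2:ℂ) + (k:ℂ) - (p':ℂ)) * lam) := by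
      congr 1; push_cast; ring
    have e2 : Complex.sinh (u + ((s2:ℂ)+(((p'+1:ℕ)):ℂ)-((p':ℂ)+1)) * lam)
        = Complex.sinh (u + (s2:ℂ) * lam) := by
      congr 1; push_cast; ring
    rw [e1, e2] at h
    exact h
  -- q-binomial recursion
  have hB : sqbinom lam (p'+1) (k+1) * Complex.sinh (((k:ℂ)+1) * lam)
      = Complex.sinh (((p':ℂ)+1) * lam) * sqbinom lam p' k := by
    have h := sq_key lam (Nat.le_add_left 1 k) (by omega : k + 1 ≤ p' + 1)
    simp only [Nat.add_sub_cancel] at h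
    have e1 : sqint lam (k+1) * Complex.sinh lam = Complex.sinh (((k:ℂ)+1) * lam) := by
      rw [sqint, div_mul_cancel₀ _ hlam]; congr 1; push_cast; ring
    have e2 : sqint lam (p'+1) * Complex.sinh lam = Complex.sinh (((p':ℂ)+1) * lam) := by
      rw [sqint, div_mul_cancel₀ _ hlam]; congr 1; push_cast; ring
    linear_combination (-(sqbinom lam (p'+1) (k+1))) * e1 + (sqbinom lam p' k) * e2
      + Complex.sinh lam * h
  -- sinh product-difference identity
  have hS : Complex.sinh (u + ((s2:ℂ) - ((p':ℂ)+1)) * lam) * Complex.sinh (u + (k:ℂ)*lam)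
      - Complex.sinh (u - lam) * Complex.sinh (u + ((s2:ℂ)+(k:ℂ)-(p':ℂ))*lam)
      = Complex.sinh (((k:ℂ)+1)*lam) * Complex.sinh (((s2:ℂ)+1-((p':ℂ)+1))*lam) := by
    have h := sinh_diff (u + (((s2:ℂ) - (p':ℂ) - 1 + (k:ℂ))/2)*lam)
      ((((s2:ℂ) - (p':ℂ) - 1 - (k:ℂ))/2)*lam) (-((((s2:ℂ)+(k:ℂ)+1-(p':ℂ))/2)*lam))
    rw [show u + (((s2:ℂ) - (p':ℂ) - 1 + (k:ℂ))/2)*lam + ((((s2:ℂ) - (p':ℂ) - 1 - (k:ℂ))/2)*lam)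
        = u + ((s2:ℂ) - ((p':ℂ)+1)) * lam from by ring,
      show u + (((s2:ℂ) - (p':ℂ) - 1 + (k:ℂ))/2)*lam - ((((s2:ℂ) - (p':ℂ) - 1 - (k:ℂ))/2)*lam)
        = u + (k:ℂ)*lam from by ring,
      show u + (((s2:ℂ) - (p':ℂ) - 1 + (k:ℂ))/2)*lam + (-((((s2:ℂ)+(k:ℂ)+1-(p':ℂ))/2)*lam))
        = u - lam from by ring,
      show u + (((s2:ℂ) - (p':ℂ) - 1 + (k:ℂ))/2)*lam - (-((((s2:ℂ)+(k:ℂ)+1-(p':ℂ))/2)*lam))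
        = u + ((s2:ℂ)+(k:ℂ)-(p':ℂ))*lam from by ring,
      show (((s2:ℂ) - (p':ℂ) - 1 - (k:ℂ))/2)*lam + (-((((s2:ℂ)+(k:ℂ)+1-(p':ℂ))/2)*lam))
        = -(((k:ℂ)+1)*lam) from by ring,
      show (-((((s2:ℂ)+(k:ℂ)+1-(p':ℂ))/2)*lam)) - (((s2:ℂ) - (p':ℂ) - 1 - (k:ℂ))/2)*lam
        = -(((s2:ℂ)+1-((p':ℂ)+1))*lam) from by ring,
      Complex.sinh_neg, Complex.sinh_neg] at h
    linear_combination h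
  rw [hP, hP', hQ]
  linear_combination (sqbinom lam (p'+1) (k+1) * P * Qk) * hS
    + (Complex.sinh (((s2:ℂ)+1-((p':ℂ)+1))*lam) * P * Qk) * hB
    + (sqbinom lam (p'+1) (k+1) * P * Complex.sinh (u - lam)) * hQ'

/-- Lemma 1, Eq. (f2): `a_{p+1}(u) f^{(p)}(σ;u) + e^{2λσ} b_p(λ)² f^{(p-1)}(σ;u)
  = f^{(p)}(σ;u-λ) a_1(u)`, where `a_{p+1}(u) = sinh(u+(2s-p)λ)`,
  `b_p(λ)² = sinh(pλ) sinh((2s+1-p)λ)` and `a_1(u) = sinh(u+2sλ)`. -/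
theorem f_identity_two (s2 : ℕ) (hs2 : 1 ≤ s2) (lam : ℂ) (hlam : Complex.sinh lam ≠ 0)
    (σ u : ℂ) (p : ℕ) (hp : 1 ≤ p) (hp2 : p ≤ s2) :
    Complex.sinh (u + ((s2 : ℂ) - (p : ℂ)) * lam) * ff s2 lam σ u p
      + Complex.exp (2 * lam * σ)
          * (Complex.sinh ((p : ℂ) * lam) * Complex.sinh (((s2 : ℂ) + 1 - (p : ℂ)) * lam))
          * ff s2 lam σ u (p - 1)
      = ff s2 lam σ (u - lam) p * Complex.sinh (u + (s2 : ℂ) * lam) := by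
  obtain ⟨p', rfl⟩ : ∃ p', p = p' + 1 := ⟨p - 1, by omega⟩
  simp only [ff, Nat.add_sub_cancel]
  push_cast
  rw [Finset.mul_sum, Finset.mul_sum, Finset.sum_mul]
  refine sum_shift_eq (p'+1) _ _ _ ?_ ?_
  · simp only [Finset.range_zero, Finset.prod_empty, pow_zero, one_mul, mul_one]
    linear_combination (norm := (push_cast; ring1))
      (sqbinom lam (p'+1) 0) * prod_shift s2 p' lam u
  · intro k hk
    linear_combination (norm := (push_cast; ring1))
      (-((-Complex.exp (2 * lam * σ))^k * Complex.exp (2 * lam * σ)))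
        * per_k lam u hlam s2 p' k (by omega)
end

section
/- With notation as in the context, if σ ∈ {-s, -s+1, ..., s} (i.e. σ = -s + m for some integer 0 ≤ m ≤ 2s), then the quasi-periodicity f^{(2s)}(σ; u−λ) = e^{2λσ} f^{(2s)}(σ; u) holds for all u ∈ ℂ. -/
open Finset Complex

noncomputable def SS (lam E u : ℂ) (p : ℕ) : ℂ :=
  ∑ k ∈ range (p+1), (-E)^k * sqbinom lam p k
    * ∏ j ∈ (range (p+1)).erase k, Complex.sinh (u + (j:ℂ)*lam)

lemma erase_top (p k : ℕ) (hk : k ≤ p) :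
    (range (p+2)).erase k = insert (p+1) ((range (p+1)).erase k) := by
  ext x; simp only [Finset.mem_erase, Finset.mem_range, Finset.mem_insert]; omega

lemma erase_bot (p k : ℕ) :
    (range (p+2)).erase (k+1) = insert 0 (((range (p+1)).erase k).image (· + 1)) := by
  ext x
  simp only [Finset.mem_erase, Finset.mem_range, Finset.mem_insert, Finset.mem_image]
  constructor
  · rintro ⟨hne, hlt⟩
    rcases Nat.eq_zero_or_pos x with h0 | h0
    · exact Or.inl h0
    · exact Or.inr ⟨x - 1, ⟨by omega, by omega⟩, by omega⟩
  · rintro (rfl | ⟨a, ⟨ha1, ha2⟩, rfl⟩)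
    · exact ⟨by omega, by omega⟩
    · exact ⟨by omega, by omega⟩

lemma prod_top (lam u : ℂ) (p k : ℕ) (hk : k ≤ p) :
    ∏ j ∈ (range (p+2)).erase k, Complex.sinh (u + (j:ℂ)*lam)
      = Complex.sinh (u + ((p:ℂ)+1)*lam) * ∏ j ∈ (range (p+1)).erase k, Complex.sinh (u + (j:ℂ)*lam) := by
  rw [erase_top p k hk, Finset.prod_insert (by simp [Finset.mem_erase])]
  push_cast
  rfl

lemma prod_bot (lam u : ℂ) (p k : ℕ) :
    ∏ j ∈ (range (p+2)).erase (k+1), Complex.sinh (u + (j:ℂ)*lam)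
      = Complex.sinh u * ∏ j ∈ (range (p+1)).erase k, Complex.sinh ((u+lam) + (j:ℂ)*lam) := by
  rw [erase_bot, Finset.prod_insert (by simp), Finset.prod_image (by intro a _ b _ h; simp only at h; omega)]
  congr 1
  · simp
  · apply Finset.prod_congr rfl; intro j _; push_cast; ring_nf

lemma key1 (lam a b : ℂ) :
    Complex.sinh ((b+1)*lam) = Complex.exp ((a+1)*lam) * Complex.sinh ((b-a)*lam)
      + Complex.exp ((a-b)*lam) * Complex.sinh ((a+1)*lam) := by
  have e1 : Complex.exp ((a+1)*lam) = Complex.cosh ((a+1)*lam) + Complex.sinh ((a+1)*lam) :=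
    (Complex.cosh_add_sinh _).symm
  have e2 : Complex.exp ((a-b)*lam) = Complex.cosh ((b-a)*lam) - Complex.sinh ((b-a)*lam) := by
    rw [show (a-b)*lam = -((b-a)*lam) by ring]; exact (Complex.cosh_sub_sinh _).symm
  rw [show (b+1)*lam = (a+1)*lam + (b-a)*lam by ring, Complex.sinh_add, e1, e2]; ring

lemma key2 (lam a b : ℂ) :
    Complex.sinh ((b+1)*lam) = Complex.exp (-(a+1)*lam) * Complex.sinh ((b-a)*lam)
      + Complex.exp ((b-a)*lam) * Complex.sinh ((a+1)*lam) := by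
  have e1 : Complex.exp (-(a+1)*lam) = Complex.cosh ((a+1)*lam) - Complex.sinh ((a+1)*lam) := by
    rw [show -(a+1)*lam = -((a+1)*lam) by ring]; exact (Complex.cosh_sub_sinh _).symm
  have e2 : Complex.exp ((b-a)*lam) = Complex.cosh ((b-a)*lam) + Complex.sinh ((b-a)*lam) :=
    (Complex.cosh_add_sinh _).symm
  rw [show (b+1)*lam = (a+1)*lam + (b-a)*lam by ring, Complex.sinh_add, e1, e2]; ring

lemma sqfact_ne (lam : ℂ) (n : ℕ) (h : ∀ j : ℕ, 1 ≤ j → j ≤ n → Complex.sinh ((j:ℂ)*lam) ≠ 0) :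
    sqfact lam n ≠ 0 := by
  induction n with
  | zero => simp [sqfact]
  | succ n ih =>
    have hl : Complex.sinh lam ≠ 0 := by
      have := h 1 le_rfl (by omega); simpa using this
    have hn : Complex.sinh ((n+1:ℕ) * lam) ≠ 0 := by
      have := h (n+1) (by omega) le_rfl; simpa using this
    have : sqint lam (n+1) ≠ 0 := by
      unfold sqint; exact div_ne_zero hn hl
    exact mul_ne_zero this (ih (fun j h1 h2 => h j h1 (by omega)))

lemma sqint_pascal1 (lam : ℂ) (p k : ℕ) (hk : k ≤ p) :
    sqint lam (p+1) = Complex.exp (((k:ℂ)+1)*lam) * sqint lam (p-k)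
      + Complex.exp (((k:ℂ)-(p:ℂ))*lam) * sqint lam (k+1) := by
  unfold sqint
  have hc : ((p-k:ℕ):ℂ) = (p:ℂ)-(k:ℂ) := by push_cast [hk]; ring
  rw [hc]
  push_cast
  rw [key1 lam (k:ℂ) (p:ℂ)]
  ring

lemma sqint_pascal2 (lam : ℂ) (p k : ℕ) (hk : k ≤ p) :
    sqint lam (p+1) = Complex.exp (-((k:ℂ)+1)*lam) * sqint lam (p-k)
      + Complex.exp (((p:ℂ)-(k:ℂ))*lam) * sqint lam (k+1) := by
  unfold sqint
  have hc : ((p-k:ℕ):ℂ) = (p:ℂ)-(k:ℂ) := by push_cast [hk]; ring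
  rw [hc]
  push_cast
  rw [key2 lam (k:ℂ) (p:ℂ)]
  ring

lemma pascal1 (lam : ℂ) (p k : ℕ) (hk : k ≤ p)
    (h : ∀ j : ℕ, 1 ≤ j → j ≤ p+1 → Complex.sinh ((j:ℂ)*lam) ≠ 0) :
    sqbinom lam (p+1) (k+1) = Complex.exp (((k:ℂ)+1)*lam) * sqbinom lam p (k+1)
      + Complex.exp (((k:ℂ)-(p:ℂ))*lam) * sqbinom lam p k := by
  have hl : Complex.sinh lam ≠ 0 := by have := h 1 le_rfl (by omega); simpa using this
  have hFne : ∀ n : ℕ, n ≤ p+1 → sqfact lam n ≠ 0 := fun n hn =>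
    sqfact_ne lam n (fun j h1 h2 => h j h1 (by omega))
  rcases eq_or_lt_of_le hk with heq | hklt
  · -- k = p
    subst heq
    have h1 : sqbinom lam (k+1) (k+1) = 1 := by
      rw [sqbinom, if_pos le_rfl]
      simp only [Nat.sub_self]
      rw [show sqfact lam 0 = 1 from rfl, one_mul, div_self (hFne (k+1) le_rfl)]
    have h2 : sqbinom lam k (k+1) = 0 := by rw [sqbinom, if_neg (by omega)]
    have h3 : sqbinom lam k k = 1 := by
      rw [sqbinom, if_pos le_rfl]
      simp only [Nat.sub_self]
      rw [show sqfact lam 0 = 1 from rfl, one_mul, div_self (hFne k (by omega))]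
    rw [h1, h2, h3]
    simp
  · -- k < p
    have e1 : p + 1 - (k+1) = p - k := by omega
    have e2 : p - (k+1) = p - k - 1 := by omega
    have e3 : p - k = (p - k - 1) + 1 := by omega
    rw [sqbinom, if_pos (by omega), sqbinom, if_pos (by omega), sqbinom, if_pos (by omega),
      e1, e2]
    rw [show sqfact lam (p+1) = sqint lam (p+1) * sqfact lam p from rfl,
      show sqfact lam (k+1) = sqint lam (k+1) * sqfact lam k from rfl]
    rw [sqint_pascal1 lam p k hk]
    have hrw : sqfact lam (p-k) = sqint lam (p-k) * sqfact lam (p-k-1) := by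
      rw [e3]; rfl
    rw [hrw]
    have hi2 : sqint lam (p-k) ≠ 0 := by
      unfold sqint
      refine div_ne_zero ?_ hl
      have := h (p-k) (by omega) (by omega); exact this
    have hi3 : sqint lam (k+1) ≠ 0 := by
      unfold sqint
      refine div_ne_zero ?_ hl
      have := h (k+1) (by omega) (by omega); exact this
    have hz : sqfact lam (p-k-1) ≠ 0 := hFne _ (by omega)
    have hy : sqfact lam k ≠ 0 := hFne _ (by omega)
    field_simp

lemma pascal2 (lam : ℂ) (p k : ℕ) (hk : k ≤ p)
    (h : ∀ j : ℕ, 1 ≤ j → j ≤ p+1 → Complex.sinh ((j:ℂ)*lam) ≠ 0) :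
    sqbinom lam (p+1) (k+1) = Complex.exp (-((k:ℂ)+1)*lam) * sqbinom lam p (k+1)
      + Complex.exp (((p:ℂ)-(k:ℂ))*lam) * sqbinom lam p k := by
  have hl : Complex.sinh lam ≠ 0 := by have := h 1 le_rfl (by omega); simpa using this
  have hFne : ∀ n : ℕ, n ≤ p+1 → sqfact lam n ≠ 0 := fun n hn =>
    sqfact_ne lam n (fun j h1 h2 => h j h1 (by omega))
  rcases eq_or_lt_of_le hk with heq | hklt
  · subst heq
    have h1 : sqbinom lam (k+1) (k+1) = 1 := by
      rw [sqbinom, if_pos le_rfl]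
      simp only [Nat.sub_self]
      rw [show sqfact lam 0 = 1 from rfl, one_mul, div_self (hFne (k+1) le_rfl)]
    have h2 : sqbinom lam k (k+1) = 0 := by rw [sqbinom, if_neg (by omega)]
    have h3 : sqbinom lam k k = 1 := by
      rw [sqbinom, if_pos le_rfl]
      simp only [Nat.sub_self]
      rw [show sqfact lam 0 = 1 from rfl, one_mul, div_self (hFne k (by omega))]
    rw [h1, h2, h3]
    simp
  · have e1 : p + 1 - (k+1) = p - k := by omega
    have e2 : p - (k+1) = p - k - 1 := by omega
    have e3 : p - k = (p - k - 1) + 1 := by omega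
    rw [sqbinom, if_pos (by omega), sqbinom, if_pos (by omega), sqbinom, if_pos (by omega),
      e1, e2]
    rw [show sqfact lam (p+1) = sqint lam (p+1) * sqfact lam p from rfl,
      show sqfact lam (k+1) = sqint lam (k+1) * sqfact lam k from rfl]
    rw [sqint_pascal2 lam p k hk]
    have hrw : sqfact lam (p-k) = sqint lam (p-k) * sqfact lam (p-k-1) := by
      rw [e3]; rfl
    rw [hrw]
    have hi2 : sqint lam (p-k) ≠ 0 := by
      unfold sqint
      refine div_ne_zero ?_ hl
      have := h (p-k) (by omega) (by omega); exact this
    have hi3 : sqint lam (k+1) ≠ 0 := by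
      unfold sqint
      refine div_ne_zero ?_ hl
      have := h (k+1) (by omega) (by omega); exact this
    have hz : sqfact lam (p-k-1) ≠ 0 := hFne _ (by omega)
    have hy : sqfact lam k ≠ 0 := hFne _ (by omega)
    field_simp

lemma sqbinom_zero (lam : ℂ) (p : ℕ) (hF : sqfact lam p ≠ 0) : sqbinom lam p 0 = 1 := by
  rw [sqbinom, if_pos (Nat.zero_le _)]
  simp only [Nat.sub_zero]
  rw [show sqfact lam 0 = 1 from rfl, mul_one, div_self hF]

lemma hpow (lam E : ℂ) (k : ℕ) :
    (-(Complex.exp lam * E))^k = (-E)^k * Complex.exp ((k:ℂ)*lam) := by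
  rw [Complex.exp_nat_mul lam k, show -(Complex.exp lam * E) = (-E) * Complex.exp lam by ring,
    mul_pow]

lemma rec1 (lam E u : ℂ) (p : ℕ)
    (h : ∀ j : ℕ, 1 ≤ j → j ≤ p+1 → Complex.sinh ((j:ℂ)*lam) ≠ 0) :
    SS lam E u (p+1) = Complex.sinh (u + ((p:ℂ)+1)*lam) * SS lam (Complex.exp lam * E) u p
      - E * (Complex.exp ((p:ℂ)*lam))⁻¹ * Complex.sinh u * SS lam (Complex.exp lam * E) (u+lam) p := by
  have hFne : ∀ n : ℕ, n ≤ p+1 → sqfact lam n ≠ 0 := fun n hn =>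
    sqfact_ne lam n (fun j h1 h2 => h j h1 (by omega))
  -- abbreviations
  set g : ℕ → ℂ := fun k => (-E)^k * Complex.exp ((k:ℂ)*lam) * sqbinom lam p k
    * ∏ j ∈ (range (p+2)).erase k, Complex.sinh (u + (j:ℂ)*lam) with hg
  set t : ℕ → ℂ := fun k => (-E)^(k+1) * Complex.exp (((k:ℂ)-(p:ℂ))*lam) * sqbinom lam p k
    * ∏ j ∈ (range (p+2)).erase (k+1), Complex.sinh (u + (j:ℂ)*lam) with ht
  have step1 : SS lam E u (p+1) = (∑ k ∈ range (p+1), (g (k+1) + t k)) +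
      ((-E)^0 * sqbinom lam (p+1) 0 * ∏ j ∈ (range (p+2)).erase 0, Complex.sinh (u + (j:ℂ)*lam)) := by
    rw [SS, show p+1+1 = p+2 from rfl, Finset.sum_range_succ']
    congr 1
    apply Finset.sum_congr rfl
    intro k hk
    have hkp : k ≤ p := by simpa using Nat.lt_succ_iff.mp (Finset.mem_range.mp hk)
    rw [pascal1 lam p k hkp h, hg, ht]
    push_cast
    ring
  have step2 : (∑ k ∈ range (p+1), (g (k+1) + t k)) = (∑ k ∈ range (p+1), g (k+1)) + ∑ k ∈ range (p+1), t k :=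
    Finset.sum_add_distrib
  have hf0 : ((-E)^0 * sqbinom lam (p+1) 0 * ∏ j ∈ (range (p+2)).erase 0, Complex.sinh (u + (j:ℂ)*lam)) = g 0 := by
    rw [hg]
    simp only [pow_zero, Nat.cast_zero, zero_mul, Complex.exp_zero]
    rw [sqbinom_zero lam (p+1) (hFne _ le_rfl), sqbinom_zero lam p (hFne _ (by omega))]
    ring
  have step3 : (∑ k ∈ range (p+1), g (k+1)) + g 0 = ∑ k ∈ range (p+2), g k :=
    (Finset.sum_range_succ' g (p+1)).symm
  have hgtop : g (p+1) = 0 := by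
    rw [hg]
    simp only
    rw [show sqbinom lam p (p+1) = 0 from by rw [sqbinom, if_neg (by omega)]]
    ring
  have step4 : ∑ k ∈ range (p+2), g k = ∑ k ∈ range (p+1), g k := by
    rw [Finset.sum_range_succ, hgtop, add_zero]
  have step5 : ∑ k ∈ range (p+1), g k
      = Complex.sinh (u + ((p:ℂ)+1)*lam) * SS lam (Complex.exp lam * E) u p := by
    rw [SS, Finset.mul_sum]
    apply Finset.sum_congr rfl
    intro k hk
    have hkp : k ≤ p := Nat.lt_succ_iff.mp (Finset.mem_range.mp hk)
    rw [hg]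
    simp only
    rw [prod_top lam u p k hkp, hpow]
    ring
  have step6 : ∑ k ∈ range (p+1), t k
      = -(E * (Complex.exp ((p:ℂ)*lam))⁻¹ * Complex.sinh u * SS lam (Complex.exp lam * E) (u+lam) p) := by
    rw [SS, Finset.mul_sum, ← Finset.sum_neg_distrib]
    apply Finset.sum_congr rfl
    intro k hk
    rw [ht]
    simp only
    rw [prod_bot lam u p k, hpow,
      show ((k:ℂ)-(p:ℂ))*lam = (k:ℂ)*lam - (p:ℂ)*lam by ring, Complex.exp_sub, div_eq_mul_inv]
    ring
  rw [step1, step2, hf0]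
  rw [add_right_comm, step3, step4, step5, step6]
  ring

lemma hpow2 (lam E : ℂ) (k : ℕ) :
    (-((Complex.exp lam)⁻¹ * E))^k = (-E)^k * Complex.exp (-(k:ℂ)*lam) := by
  have h1 : Complex.exp (-(k:ℂ)*lam) = ((Complex.exp lam)⁻¹)^k := by
    rw [show -(k:ℂ)*lam = -((k:ℂ)*lam) by ring, Complex.exp_neg, Complex.exp_nat_mul, inv_pow]
  rw [h1, show -((Complex.exp lam)⁻¹ * E) = (-E) * (Complex.exp lam)⁻¹ by ring, mul_pow]

lemma rec2 (lam E u : ℂ) (p : ℕ)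
    (h : ∀ j : ℕ, 1 ≤ j → j ≤ p+1 → Complex.sinh ((j:ℂ)*lam) ≠ 0) :
    SS lam E u (p+1) = Complex.sinh (u + ((p:ℂ)+1)*lam) * SS lam ((Complex.exp lam)⁻¹ * E) u p
      - E * Complex.exp ((p:ℂ)*lam) * Complex.sinh u * SS lam ((Complex.exp lam)⁻¹ * E) (u+lam) p := by
  have hFne : ∀ n : ℕ, n ≤ p+1 → sqfact lam n ≠ 0 := fun n hn =>
    sqfact_ne lam n (fun j h1 h2 => h j h1 (by omega))
  set g : ℕ → ℂ := fun k => (-E)^k * Complex.exp (-(k:ℂ)*lam) * sqbinom lam p k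
    * ∏ j ∈ (range (p+2)).erase k, Complex.sinh (u + (j:ℂ)*lam) with hg
  set t : ℕ → ℂ := fun k => (-E)^(k+1) * Complex.exp (((p:ℂ)-(k:ℂ))*lam) * sqbinom lam p k
    * ∏ j ∈ (range (p+2)).erase (k+1), Complex.sinh (u + (j:ℂ)*lam) with ht
  have step1 : SS lam E u (p+1) = (∑ k ∈ range (p+1), (g (k+1) + t k)) +
      ((-E)^0 * sqbinom lam (p+1) 0 * ∏ j ∈ (range (p+2)).erase 0, Complex.sinh (u + (j:ℂ)*lam)) := by
    rw [SS, show p+1+1 = p+2 from rfl, Finset.sum_range_succ']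
    congr 1
    apply Finset.sum_congr rfl
    intro k hk
    have hkp : k ≤ p := by simpa using Nat.lt_succ_iff.mp (Finset.mem_range.mp hk)
    rw [pascal2 lam p k hkp h, hg, ht]
    push_cast
    ring
  have step2 : (∑ k ∈ range (p+1), (g (k+1) + t k)) = (∑ k ∈ range (p+1), g (k+1)) + ∑ k ∈ range (p+1), t k :=
    Finset.sum_add_distrib
  have hf0 : ((-E)^0 * sqbinom lam (p+1) 0 * ∏ j ∈ (range (p+2)).erase 0, Complex.sinh (u + (j:ℂ)*lam)) = g 0 := by
    rw [hg]
    simp only [pow_zero, Nat.cast_zero, neg_zero, zero_mul, Complex.exp_zero]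
    rw [sqbinom_zero lam (p+1) (hFne _ le_rfl), sqbinom_zero lam p (hFne _ (by omega))]
    ring
  have step3 : (∑ k ∈ range (p+1), g (k+1)) + g 0 = ∑ k ∈ range (p+2), g k :=
    (Finset.sum_range_succ' g (p+1)).symm
  have hgtop : g (p+1) = 0 := by
    rw [hg]
    simp only
    rw [show sqbinom lam p (p+1) = 0 from by rw [sqbinom, if_neg (by omega)]]
    ring
  have step4 : ∑ k ∈ range (p+2), g k = ∑ k ∈ range (p+1), g k := by
    rw [Finset.sum_range_succ, hgtop, add_zero]
  have step5 : ∑ k ∈ range (p+1), g k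
      = Complex.sinh (u + ((p:ℂ)+1)*lam) * SS lam ((Complex.exp lam)⁻¹ * E) u p := by
    rw [SS, Finset.mul_sum]
    apply Finset.sum_congr rfl
    intro k hk
    have hkp : k ≤ p := Nat.lt_succ_iff.mp (Finset.mem_range.mp hk)
    rw [hg]
    simp only
    rw [prod_top lam u p k hkp, hpow2]
    ring
  have step6 : ∑ k ∈ range (p+1), t k
      = -(E * Complex.exp ((p:ℂ)*lam) * Complex.sinh u * SS lam ((Complex.exp lam)⁻¹ * E) (u+lam) p) := by
    rw [SS, Finset.mul_sum, ← Finset.sum_neg_distrib]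
    apply Finset.sum_congr rfl
    intro k hk
    rw [ht]
    simp only
    rw [prod_bot lam u p k, hpow2,
      show ((p:ℂ)-(k:ℂ))*lam = (p:ℂ)*lam + (-(k:ℂ)*lam) by ring, Complex.exp_add]
    ring
  rw [step1, step2, hf0]
  rw [add_right_comm, step3, step4, step5, step6]
  ring

lemma shift1 (u y : ℂ) :
    Complex.sinh (u+y) - Complex.exp (-y) * Complex.sinh u = Complex.exp u * Complex.sinh y := by
  rw [Complex.sinh_add, ← Complex.cosh_sub_sinh y, ← Complex.cosh_add_sinh u]; ring

lemma shift2 (u y : ℂ) :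
    Complex.sinh (u+y) - Complex.exp y * Complex.sinh u = Complex.exp (-u) * Complex.sinh y := by
  rw [Complex.sinh_add, ← Complex.cosh_add_sinh y, ← Complex.cosh_sub_sinh u]; ring

lemma main (lam : ℂ) : ∀ p : ℕ,
    (∀ j : ℕ, 1 ≤ j → j ≤ p → Complex.sinh ((j:ℂ)*lam) ≠ 0) → ∀ m : ℕ, m ≤ p → ∀ u : ℂ,
    SS lam (Complex.exp ((2*(m:ℂ) - (p:ℂ))*lam)) u p
      = Complex.exp (((p:ℂ) - 2*(m:ℂ))*u) * ∏ j ∈ Icc 1 p, Complex.sinh ((j:ℂ)*lam) := by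
  intro p
  induction p with
  | zero =>
    intro _ m hm u
    interval_cases m
    simp [SS, sqbinom, sqfact]
  | succ p ih =>
    intro h m hm u
    have h' : ∀ j : ℕ, 1 ≤ j → j ≤ p → Complex.sinh ((j:ℂ)*lam) ≠ 0 :=
      fun j h1 h2 => h j h1 (by omega)
    have hC : ∏ j ∈ Icc 1 (p+1), Complex.sinh ((j:ℂ)*lam)
        = (∏ j ∈ Icc 1 p, Complex.sinh ((j:ℂ)*lam)) * Complex.sinh (((p:ℂ)+1)*lam) := by
      rw [Finset.prod_Icc_succ_top (by omega)]
      push_cast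
      ring
    rcases Nat.lt_succ_iff_lt_or_eq.mp (Nat.lt_succ_of_le hm) with hm' | rfl
    · -- m ≤ p : use rec1
      have hmp : m ≤ p := by omega
      have hE : Complex.exp ((2*(m:ℂ) - ((p:ℕ)+1:ℕ))*lam)
          = Complex.exp ((2*(m:ℂ) - ((p:ℂ)+1))*lam) := by push_cast; ring_nf
      have hQE : Complex.exp lam * Complex.exp ((2*(m:ℂ) - ((p:ℂ)+1))*lam)
          = Complex.exp ((2*(m:ℂ) - (p:ℂ))*lam) := by
        rw [← Complex.exp_add]; congr 1; ring
      push_cast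
      rw [show ((2:ℂ)*(m:ℂ) - ((p:ℂ)+1)) = (2*(m:ℂ) - ((p:ℂ)+1)) from rfl]
      rw [rec1 lam _ u p h, hQE, ih h' m hmp u, ih h' m hmp (u+lam), hC]
      -- scalar assembly
      set C := ∏ j ∈ Icc 1 p, Complex.sinh ((j:ℂ)*lam) with hCC
      have E1 : Complex.exp (((p:ℂ) - 2*(m:ℂ))*(u+lam))
          = Complex.exp (((p:ℂ) - 2*(m:ℂ))*u) * Complex.exp (((p:ℂ) - 2*(m:ℂ))*lam) := by
        rw [← Complex.exp_add]; congr 1; ring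
      have E2 : Complex.exp ((2*(m:ℂ) - ((p:ℂ)+1))*lam) * Complex.exp (((p:ℂ) - 2*(m:ℂ))*lam)
            * (Complex.exp ((p:ℂ)*lam))⁻¹ = Complex.exp (-(((p:ℂ)+1)*lam)) := by
        rw [← Complex.exp_neg ((p:ℂ)*lam), ← Complex.exp_add, ← Complex.exp_add]; congr 1; ring
      have E3 : Complex.exp (((p:ℂ)+1 - 2*(m:ℂ))*u)
          = Complex.exp (((p:ℂ) - 2*(m:ℂ))*u) * Complex.exp u := by
        rw [← Complex.exp_add]; congr 1; ring
      have SH := shift1 u (((p:ℂ)+1)*lam)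
      linear_combination (Complex.exp (((p:ℂ) - 2*(m:ℂ))*u) * C) * SH
        - (Complex.exp ((2*(m:ℂ) - ((p:ℂ)+1))*lam) * (Complex.exp ((p:ℂ)*lam))⁻¹
            * Complex.sinh u * C) * E1
        - (Complex.sinh u * Complex.exp (((p:ℂ) - 2*(m:ℂ))*u) * C) * E2
        - (C * Complex.sinh (((p:ℂ)+1)*lam)) * E3
    · -- m = p+1 : use rec2
      have hE : Complex.exp ((2*((p:ℕ)+1:ℕ) - ((p:ℕ)+1:ℕ))*lam)
          = Complex.exp ((((p:ℂ)+1))*lam) := by push_cast; ring_nf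
      have hQE : (Complex.exp lam)⁻¹ * Complex.exp ((((p:ℂ)+1))*lam)
          = Complex.exp ((2*(p:ℂ) - (p:ℂ))*lam) := by
        rw [← Complex.exp_neg, ← Complex.exp_add]; congr 1; ring
      push_cast
      rw [show ((2:ℂ)*((p:ℂ)+1) - ((p:ℂ)+1)) = ((p:ℂ)+1) by ring]
      rw [rec2 lam _ u p h, hQE, ih h' p le_rfl u, ih h' p le_rfl (u+lam), hC]
      set C := ∏ j ∈ Icc 1 p, Complex.sinh ((j:ℂ)*lam) with hCC
      have E1 : Complex.exp (((p:ℂ) - 2*(p:ℂ))*(u+lam))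
          = Complex.exp (((p:ℂ) - 2*(p:ℂ))*u) * Complex.exp (((p:ℂ) - 2*(p:ℂ))*lam) := by
        rw [← Complex.exp_add]; congr 1; ring
      have E2 : Complex.exp ((((p:ℂ)+1))*lam) * Complex.exp (((p:ℂ) - 2*(p:ℂ))*lam)
            * Complex.exp ((p:ℂ)*lam) = Complex.exp ((((p:ℂ)+1))*lam) := by
        rw [← Complex.exp_add, ← Complex.exp_add]; congr 1; ring
      have E3 : Complex.exp (((p:ℂ)+1 - 2*((p:ℂ)+1))*u)
          = Complex.exp (((p:ℂ) - 2*(p:ℂ))*u) * Complex.exp (-u) := by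
        rw [← Complex.exp_add]; congr 1; ring
      have SH := shift2 u (((p:ℂ)+1)*lam)
      linear_combination (Complex.exp (((p:ℂ) - 2*(p:ℂ))*u) * C) * SH
        - (Complex.exp ((((p:ℂ)+1))*lam) * Complex.exp ((p:ℂ)*lam) * Complex.sinh u * C) * E1
        - (Complex.sinh u * Complex.exp (((p:ℂ) - 2*(p:ℂ))*u) * C) * E2
        - (C * Complex.sinh (((p:ℂ)+1)*lam)) * E3

lemma ff_eq_SS (s2 : ℕ) (lam σ u : ℂ) :
    ff s2 lam σ u s2 = SS lam (Complex.exp (2*lam*σ)) u s2 := by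
  rw [ff, SS]
  apply Finset.sum_congr rfl
  intro k hk
  have hks : k ≤ s2 := Nat.lt_succ_iff.mp (Finset.mem_range.mp hk)
  rw [mul_assoc]
  congr 1
  -- products
  have harg : ∀ j : ℕ, Complex.sinh (u + ((s2:ℂ) + (j:ℂ) + 1 - (s2:ℂ)) * lam)
      = Complex.sinh (u + ((j:ℕ)+1:ℕ) * lam) := by
    intro j; congr 1; push_cast; ring
  rw [Finset.prod_congr rfl (fun j _ => harg j)]
  have hreindex : ∏ j ∈ Finset.Ico k s2, Complex.sinh (u + (((j:ℕ)+1:ℕ):ℂ) * lam)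
      = ∏ j ∈ Finset.Ico (k+1) (s2+1), Complex.sinh (u + (j:ℂ) * lam) :=
    Finset.prod_Ico_add' (fun j : ℕ => Complex.sinh (u + (j:ℂ)*lam)) k s2 1
  rw [hreindex]
  have hsplit : (range (s2+1)).erase k = range k ∪ Finset.Ico (k+1) (s2+1) := by
    ext x
    simp only [Finset.mem_erase, Finset.mem_range, Finset.mem_union, Finset.mem_Ico]
    omega
  rw [hsplit, Finset.prod_union (by
    rw [Finset.disjoint_left]
    intro a ha hb
    simp only [Finset.mem_range] at ha
    simp only [Finset.mem_Ico] at hb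
    omega)]

lemma sqfact_zero (lam : ℂ) (n j : ℕ) (h1 : 1 ≤ j) (h2 : j ≤ n)
    (hz : Complex.sinh ((j:ℂ)*lam) = 0) : sqfact lam n = 0 := by
  induction n with
  | zero => omega
  | succ n ih =>
    by_cases hj : j = n + 1
    · subst hj
      rw [show sqfact lam (n+1) = sqint lam (n+1) * sqfact lam n from rfl]
      rw [sqint, show ((n+1:ℕ):ℂ) = ((n:ℕ):ℂ)+1 by push_cast; ring] at *
      rw [hz, zero_div, zero_mul]
    · rw [show sqfact lam (n+1) = sqint lam (n+1) * sqfact lam n from rfl, ih (by omega), mul_zero]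

/-- Lemma 1, Eq. (f3): if `σ ∈ {-s, -s+1, …, s}` (i.e. `σ = -s + m` for some `0 ≤ m ≤ 2s`),
then `f^{(2s)}(σ;u-λ) = e^{2λσ} f^{(2s)}(σ;u)` for all `u`. -/
theorem f_quasi_periodicity (s2 : ℕ) (hs2 : 1 ≤ s2) (lam : ℂ) (hlam : Complex.sinh lam ≠ 0)
    (m : ℕ) (hm : m ≤ s2) (σ : ℂ) (hσ : σ = -(s2 : ℂ) / 2 + (m : ℂ)) (u : ℂ) :
    ff s2 lam σ (u - lam) s2 = Complex.exp (2 * lam * σ) * ff s2 lam σ u s2 := by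
  by_cases hall : ∀ j : ℕ, 1 ≤ j → j ≤ s2 → Complex.sinh ((j:ℂ)*lam) ≠ 0
  · have hE : Complex.exp (2*lam*σ) = Complex.exp ((2*(m:ℂ) - (s2:ℂ))*lam) := by
      rw [hσ]; congr 1; ring
    rw [ff_eq_SS, ff_eq_SS, hE]
    rw [main lam s2 hall m hm (u - lam), main lam s2 hall m hm u]
    rw [show ((s2:ℂ) - 2*(m:ℂ))*(u - lam)
        = ((s2:ℂ) - 2*(m:ℂ))*u + (2*(m:ℂ) - (s2:ℂ))*lam by ring, Complex.exp_add]
    ring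
  · push_neg at hall
    obtain ⟨j, h1, h2, hz⟩ := hall
    have hb : ∀ k : ℕ, sqbinom lam s2 k = 0 := by
      intro k
      rw [sqbinom]
      split
      · rw [sqfact_zero lam s2 j h1 h2 hz, zero_div]
      · rfl
    have hzero : ∀ v : ℂ, ff s2 lam σ v s2 = 0 := by
      intro v
      rw [ff]
      apply Finset.sum_eq_zero
      intro k _
      rw [hb k]
      ring
    rw [hzero, hzero, mul_zero]
end
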